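/- Separation by a unit sphere: If S is a closed, spindle-convex proper subset of ℝ³ and z ∈ ℝ³ \ S, then there exists a closed unit ball B ⊆ ℝ³ with S ⊆ B and z ∉ B. -/

import Mathlib

open scoped InnerProductSpace
open Metric

set_option maxHeartbeats 1000000
noncomputable section

abbrev E3 : Type := EuclideanSpace ℝ (Fin 3)

/-- `S` is spindle-convex: for any two distinct points `a b ∈ S` and any circle of
radius `r ≥ 1` (center `c`, lying in the plane through `c` with normal `n`) passing
through `a` and `b`, every point of the (closed) short circular arc with endpoints
`a, b` belongs to `S`.  The short arc is cut off by a hyperplane through the chord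
`[a,b]` with in-plane direction `u` pointing towards the short side (`0 ≤ ⟪a-c,u⟫`). -/
def SpindleConvex (S : Set E3) : Prop :=
  ∀ a ∈ S, ∀ b ∈ S, a ≠ b →
    ∀ (c n u : E3) (r : ℝ), 1 ≤ r →
      ‖a - c‖ = r → ‖b - c‖ = r →
      n ≠ 0 → ⟪a - c, n⟫_ℝ = 0 → ⟪b - c, n⟫_ℝ = 0 →
      u ≠ 0 → ⟪u, n⟫_ℝ = 0 → ⟪a - c, u⟫_ℝ = ⟪b - c, u⟫_ℝ → 0 ≤ ⟪a - c, u⟫_ℝ →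
      ∀ p : E3, ‖p - c‖ = r → ⟪p - c, n⟫_ℝ = 0 → ⟪a - c, u⟫_ℝ ≤ ⟪p - c, u⟫_ℝ → p ∈ S

private lemma norm_eq_of_inner_self {y : E3} {r : ℝ} (hr : 0 ≤ r)
    (h : ⟪y, y⟫_ℝ = r ^ 2) : ‖y‖ = r := by
  have h2 : ‖y‖ ^ 2 = r ^ 2 := by rw [← real_inner_self_eq_norm_sq, h]
  nlinarith [norm_nonneg y]

private lemma exists_orth (v f : E3) :
    ∃ n : E3, n ≠ 0 ∧ ⟪v, n⟫_ℝ = 0 ∧ ⟪f, n⟫_ℝ = 0 := by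
  by_contra h
  push_neg at h
  set φ : E3 →ₗ[ℝ] ℝ × ℝ :=
    LinearMap.prod ((innerSL ℝ v).toLinearMap) ((innerSL ℝ f).toLinearMap) with hφ
  have hinj : Function.Injective φ := by
    rw [← LinearMap.ker_eq_bot, Submodule.eq_bot_iff]
    intro x hx
    by_contra hx0
    have hx' : (⟪v, x⟫_ℝ, ⟪f, x⟫_ℝ) = (0, 0) := hx
    exact h x hx0 (congrArg Prod.fst hx') (congrArg Prod.snd hx')
  have h1 := LinearMap.finrank_le_finrank_of_injective hinj
  have h2 : Module.finrank ℝ E3 = 3 := by simp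
  have h3 : Module.finrank ℝ (ℝ × ℝ) = 2 := by simp
  omega

private lemma exists_unit_orth (v : E3) :
    ∃ f : E3, ‖f‖ = 1 ∧ ⟪v, f⟫_ℝ = 0 := by
  obtain ⟨n, hn0, hvn, -⟩ := exists_orth v v
  refine ⟨‖n‖⁻¹ • n, ?_, ?_⟩
  · rw [norm_smul]; simp [norm_ne_zero_iff.mpr hn0]
  · rw [real_inner_smul_right, hvn, mul_zero]

private lemma arith1 {r m β γ t : ℝ} (hm : 0 < m) (hr : 0 < r) (hβ0 : 0 ≤ β)
    (hγ0 : 0 ≤ γ) (hγ2 : γ ^ 2 = m ^ 2 - β ^ 2) (ht0 : 0 ≤ t)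
    (ht2 : t ^ 2 = r ^ 2 - m ^ 2 / 4) (hβr : 2 * r * β < m ^ 2) :
    t ≤ r * (γ / m) := by
  have hpos : 0 < m ^ 2 + 2 * r * β := by nlinarith
  have h4 : 4 * r ^ 2 * β ^ 2 ≤ m ^ 4 := by
    nlinarith [mul_pos (sub_pos.mpr hβr) hpos]
  have h5 : t ^ 2 ≤ (r * (γ / m)) ^ 2 := by
    have h6 : (r * (γ / m)) ^ 2 = r ^ 2 * γ ^ 2 / m ^ 2 := by field_simp
    rw [ht2, h6, le_div_iff₀ (by positivity)]
    nlinarith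
  nlinarith [mul_nonneg (mul_nonneg hr.le hγ0) (le_of_lt (inv_pos.mpr hm)),
    mul_nonneg hr.le (div_nonneg hγ0 hm.le)]

private lemma arith2 {r m β γ t : ℝ} (hm : 0 < m) (hr : 0 < r) (hβ0 : 0 ≤ β)
    (hβm : β < m) (hrm : m / 2 ≤ r) (hγ0 : 0 ≤ γ) (hγ2 : γ ^ 2 = m ^ 2 - β ^ 2)
    (ht0 : 0 ≤ t) (ht2 : t ^ 2 = r ^ 2 - m ^ 2 / 4) (hβr : 2 * r * β < m ^ 2) :
    0 < -β / 2 - t * (γ / m) + r := by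
  have hlhs : 0 < r - β / 2 := by linarith
  have hsq : (t * (γ / m)) ^ 2 < (r - β / 2) ^ 2 := by
    have h6 : (t * (γ / m)) ^ 2 = t ^ 2 * γ ^ 2 / m ^ 2 := by field_simp
    rw [h6, div_lt_iff₀ (by positivity)]
    nlinarith [mul_pos (sub_pos.mpr hβr) (sub_pos.mpr hβr)]
  have htγ : 0 ≤ t * (γ / m) := mul_nonneg ht0 (div_nonneg hγ0 hm.le)
  nlinarith

private lemma seg_mem (S : Set E3) (hcl : IsClosed S) (hsc : SpindleConvex S)
    {a b : E3} (ha : a ∈ S) (hb : b ∈ S) {t : ℝ} (ht0 : 0 ≤ t) (ht1 : t ≤ 1) :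
    a + t • (b - a) ∈ S := by
  by_cases hab : a = b
  · subst hab; simpa using ha
  set v : E3 := b - a with hvdef
  have hv0 : v ≠ 0 := sub_ne_zero.mpr (Ne.symm hab)
  have hvn : 0 < ‖v‖ := norm_pos_iff.mpr hv0
  obtain ⟨u, hu1, hvu⟩ := exists_unit_orth v
  have hu0 : u ≠ 0 := by intro h; rw [h] at hu1; simp at hu1
  obtain ⟨n, hn0, hvn', hun⟩ := exists_orth v u
  have hvv : ⟪v, v⟫_ℝ = ‖v‖ ^ 2 := real_inner_self_eq_norm_sq v
  have huu : ⟪u, u⟫_ℝ = 1 := by rw [real_inner_self_eq_norm_sq, hu1]; norm_num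
  have huv : ⟪u, v⟫_ℝ = 0 := by rw [real_inner_comm]; exact hvu
  have hnv : ⟪n, v⟫_ℝ = 0 := by rw [real_inner_comm]; exact hvn'
  have hnu : ⟪n, u⟫_ℝ = 0 := by rw [real_inner_comm]; exact hun
  rw [← hcl.closure_eq, Metric.mem_closure_iff]
  intro ε hε
  set r : ℝ := max (max 1 ‖v‖) (‖v‖ ^ 2 / ε) with hrdef
  have hr1 : 1 ≤ r := le_trans (le_max_left _ _) (le_max_left _ _)
  have hrv : ‖v‖ ≤ r := le_trans (le_max_right 1 _) (le_max_left _ _)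
  have hrε : ‖v‖ ^ 2 / ε ≤ r := le_max_right _ _
  have hr0 : 0 < r := lt_of_lt_of_le one_pos hr1
  set s : ℝ := (t - 1 / 2) * ‖v‖ with hsdef
  have hs : s ^ 2 ≤ ‖v‖ ^ 2 / 4 := by
    have h1 : (t - 1 / 2) ^ 2 ≤ 1 / 4 := by nlinarith
    calc s ^ 2 = (t - 1 / 2) ^ 2 * ‖v‖ ^ 2 := by rw [hsdef]; ring
    _ ≤ (1 / 4) * ‖v‖ ^ 2 := by nlinarith [sq_nonneg ‖v‖]
    _ = ‖v‖ ^ 2 / 4 := by ring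
  have hhge : ‖v‖ ^ 2 / 4 ≤ r ^ 2 := by nlinarith
  set h : ℝ := Real.sqrt (r ^ 2 - ‖v‖ ^ 2 / 4) with hhdef
  set g : ℝ := Real.sqrt (r ^ 2 - s ^ 2) with hgdef
  have hh0 : 0 ≤ h := Real.sqrt_nonneg _
  have hg0 : 0 ≤ g := Real.sqrt_nonneg _
  have hh2 : h ^ 2 = r ^ 2 - ‖v‖ ^ 2 / 4 := Real.sq_sqrt (by linarith)
  have hg2 : g ^ 2 = r ^ 2 - s ^ 2 := Real.sq_sqrt (by nlinarith)
  have hgh : h ≤ g := by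
    apply Real.sqrt_le_sqrt; linarith
  have hv2r : ‖v‖ ^ 2 ≤ r ^ 2 := by nlinarith
  have hhr2 : r / 2 ≤ h := by
    nlinarith [hh2, hh0, sq_nonneg (h - r / 2), sq_nonneg (h + r / 2)]
  set c : E3 := (a + (1 / 2 : ℝ) • v) - h • u with hcdef
  set p : E3 := (a + t • v) + (g - h) • u with hpdef
  have hac : a - c = (-(1 / 2 : ℝ)) • v + h • u := by
    rw [hcdef]; module
  have hbc : b - c = ((1 / 2 : ℝ)) • v + h • u := by
    rw [hcdef, hvdef]; module
  have hpc : p - c = (t - 1 / 2) • v + g • u := by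
    rw [hpdef, hcdef]; module
  have hnorm : ∀ (α β : ℝ), α ^ 2 * ‖v‖ ^ 2 + β ^ 2 = r ^ 2 → ‖α • v + β • u - c + c - (α • v + β • u)‖ = 0 := by
    intro α β _; simp
  -- norms
  have expand : ∀ (α β : ℝ), ⟪α • v + β • u, α • v + β • u⟫_ℝ = α ^ 2 * ‖v‖ ^ 2 + β ^ 2 := by
    intro α β
    simp only [inner_add_left, inner_add_right, real_inner_smul_left, real_inner_smul_right,
      hvv, huu, huv, hvu]
    ring
  have hacn : ‖a - c‖ = r := by
    apply norm_eq_of_inner_self (le_of_lt hr0)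
    rw [hac, expand]; nlinarith [hh2]
  have hbcn : ‖b - c‖ = r := by
    apply norm_eq_of_inner_self (le_of_lt hr0)
    rw [hbc, expand]; nlinarith [hh2]
  have hpcn : ‖p - c‖ = r := by
    apply norm_eq_of_inner_self (le_of_lt hr0)
    rw [hpc, expand]
    have hss : s ^ 2 = (t - 1 / 2) ^ 2 * ‖v‖ ^ 2 := by rw [hsdef]; ring
    linarith [hg2]
  have innern : ∀ (α β : ℝ), ⟪α • v + β • u, n⟫_ℝ = 0 := by
    intro α β
    simp only [inner_add_left, real_inner_smul_left, hvn', hun]; ring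
  have inneru : ∀ (α β : ℝ), ⟪α • v + β • u, u⟫_ℝ = β := by
    intro α β
    simp only [inner_add_left, real_inner_smul_left, hvu, huu]; ring
  have hmem : p ∈ S := by
    refine hsc a ha b hb hab c n u r hr1 hacn hbcn hn0 ?_ ?_ hu0 hun ?_ ?_ p hpcn ?_ ?_
    · rw [hac, innern]
    · rw [hbc, innern]
    · rw [hac, hbc, inneru, inneru]
    · rw [hac, inneru]; exact hh0
    · rw [hpc, innern]
    · rw [hac, hpc, inneru, inneru]; exact hgh
  refine ⟨p, hmem, ?_⟩
  have hdist : dist (a + t • v) p = g - h := by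
    rw [dist_eq_norm]
    have heq : a + t • v - p = (h - g) • u := by rw [hpdef]; module
    rw [heq, norm_smul, Real.norm_eq_abs, hu1, mul_one, abs_sub_comm,
      abs_of_nonneg (by linarith : (0:ℝ) ≤ g - h)]
  rw [hdist]
  -- g - h < ε
  have hsum : r ≤ g + h := by linarith
  have hprod : (g - h) * (g + h) ≤ ‖v‖ ^ 2 / 4 := by
    have hexp : (g - h) * (g + h) = g ^ 2 - h ^ 2 := by ring
    rw [hexp, hg2, hh2]; nlinarith [sq_nonneg s]
  have hεr : ‖v‖ ^ 2 ≤ ε * r := by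
    rw [div_le_iff₀ hε] at hrε; linarith [hrε]
  have h1 : (g - h) * r ≤ ‖v‖ ^ 2 / 4 := by
    calc (g - h) * r ≤ (g - h) * (g + h) :=
          mul_le_mul_of_nonneg_left hsum (by linarith)
    _ ≤ ‖v‖ ^ 2 / 4 := hprod
  have h2 : (g - h) * r ≤ (ε / 4) * r := by linarith
  have h3 : g - h ≤ ε / 4 := le_of_mul_le_mul_right (by linarith) hr0
  linarith

private lemma support_ineq (S : Set E3) (hcl : IsClosed S) (hsc : SpindleConvex S)
    {z p : E3} (hp : p ∈ S) (hd : ∀ x ∈ S, ‖p - z‖ ≤ ‖x - z‖)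
    {x : E3} (hx : x ∈ S) : ⟪x - p, z - p⟫_ℝ ≤ 0 := by
  by_contra hpos
  push_neg at hpos
  set w : E3 := x - p with hwdef
  set I : ℝ := ⟪w, z - p⟫_ℝ with hIdef
  have hw0 : w ≠ 0 := by
    intro h; rw [hIdef, h] at hpos; simp at hpos
  have hwn : 0 < ‖w‖ := norm_pos_iff.mpr hw0
  set s : ℝ := min 1 (I / ‖w‖ ^ 2) with hsdef
  have hs0 : 0 < s := by
    apply lt_min one_pos
    positivity
  have hs1 : s ≤ 1 := min_le_left _ _
  have hsI : s * ‖w‖ ^ 2 ≤ I := by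
    have h1 : s ≤ I / ‖w‖ ^ 2 := min_le_right _ _
    rw [le_div_iff₀ (by positivity)] at h1
    linarith
  have hmem : p + s • w ∈ S := seg_mem S hcl hsc hp hx (le_of_lt hs0) hs1
  have hdist := hd _ hmem
  have hexp : p + s • w - z = (p - z) + s • w := by module
  have hsq : ‖p + s • w - z‖ ^ 2 = ‖p - z‖ ^ 2 + 2 * (s * ⟪p - z, w⟫_ℝ) + s ^ 2 * ‖w‖ ^ 2 := by
    rw [hexp, norm_add_sq_real, real_inner_smul_right, norm_smul, Real.norm_eq_abs,
      abs_of_nonneg (le_of_lt hs0)]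
    ring
  have hIneg : ⟪p - z, w⟫_ℝ = -I := by
    rw [hIdef, real_inner_comm]
    rw [show p - z = -(z - p) by module, inner_neg_right]
  have hnn : ‖p - z‖ ^ 2 ≤ ‖p + s • w - z‖ ^ 2 := by
    have := hdist
    nlinarith [norm_nonneg (p - z), norm_nonneg (p + s • w - z)]
  rw [hsq, hIneg] at hnn
  nlinarith

private lemma key (S : Set E3) (hsc : SpindleConvex S) {p q e : E3}
    (hp : p ∈ S) (hq : q ∈ S) (he : ‖e‖ = 1)
    (hsupp : ∀ x ∈ S, ⟪x - p, e⟫_ℝ ≤ 0)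
    (hγ : (⟪q - p, e⟫_ℝ) ^ 2 < ‖q - p‖ ^ 2)
    (hrc : 2 * max 1 (‖q - p‖ / 2) * (-⟪q - p, e⟫_ℝ) < ‖q - p‖ ^ 2) :
    False := by
  obtain ⟨w, hwdef⟩ : ∃ w : E3, w = q - p := ⟨_, rfl⟩
  rw [← hwdef] at hγ hrc
  set m : ℝ := ‖w‖ with hmdef
  set β : ℝ := -⟪w, e⟫_ℝ with hβdef
  have hβ0 : 0 ≤ β := by
    have h := hsupp q hq
    rw [← hwdef] at h
    simp only [hβdef]
    linarith
  have hm0 : 0 < m := by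
    have h1 : 0 ≤ (⟪w, e⟫_ℝ) ^ 2 := sq_nonneg _
    have h2 : 0 ≤ m := norm_nonneg w
    nlinarith [hγ]
  have hw0 : w ≠ 0 := by
    intro h; rw [hmdef, h] at hm0; simp at hm0
  have hpq : p ≠ q := by
    intro h; rw [h] at hwdef; simp at hwdef; exact hw0 hwdef
  have hβm : β < m := by nlinarith [hγ, hm0]
  have hee : ⟪e, e⟫_ℝ = 1 := by rw [real_inner_self_eq_norm_sq, he]; norm_num
  have hwe : ⟪w, e⟫_ℝ = -β := by rw [hβdef]; ring
  have hew : ⟪e, w⟫_ℝ = -β := by rw [real_inner_comm]; exact hwe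
  have hww : ⟪w, w⟫_ℝ = m ^ 2 := by rw [hmdef]; exact real_inner_self_eq_norm_sq w
  set γ : ℝ := Real.sqrt (m ^ 2 - β ^ 2) with hγdef
  have hγ2 : γ ^ 2 = m ^ 2 - β ^ 2 := Real.sq_sqrt (by nlinarith [hβ0, hβm])
  have hγpos : 0 < γ := Real.sqrt_pos.mpr (by nlinarith [hβ0, hβm])
  have hγne : γ ≠ 0 := ne_of_gt hγpos
  have hmne : m ≠ 0 := ne_of_gt hm0
  obtain ⟨f, hfdef⟩ : ∃ f : E3, f = γ⁻¹ • (w + β • e) := ⟨_, rfl⟩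
  have hγf : γ • f = w + β • e := by
    rw [hfdef, smul_smul, mul_inv_cancel₀ hγne, one_smul]
  have hef : ⟪e, f⟫_ℝ = 0 := by
    have h := congrArg (fun y => ⟪e, y⟫_ℝ) hγf
    simp only [real_inner_smul_right, inner_add_right] at h
    rw [hew, hee] at h
    have h2 : γ * ⟪e, f⟫_ℝ = 0 := by linarith
    exact (mul_eq_zero.mp h2).resolve_left hγne
  have hfe : ⟪f, e⟫_ℝ = 0 := by rw [real_inner_comm]; exact hef
  have hfw : ⟪f, w⟫_ℝ = γ := by
    have h := congrArg (fun y => ⟪y, w⟫_ℝ) hγf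
    simp only [real_inner_smul_left, inner_add_left] at h
    rw [hww, hew] at h
    have h2 : γ * ⟪f, w⟫_ℝ = γ * γ := by nlinarith [hγ2]
    exact mul_left_cancel₀ hγne h2
  have hwf : ⟪w, f⟫_ℝ = γ := by rw [real_inner_comm]; exact hfw
  have hff : ⟪f, f⟫_ℝ = 1 := by
    have h : ⟪γ • f, γ • f⟫_ℝ = ⟪w + β • e, w + β • e⟫_ℝ := by rw [hγf]
    simp only [inner_add_left, inner_add_right, real_inner_smul_left, real_inner_smul_right,
      hww, hwe, hew, hee] at h
    have h2 : γ * γ * ⟪f, f⟫_ℝ = γ * γ * 1 := by nlinarith [hγ2]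
    exact mul_left_cancel₀ (mul_ne_zero hγne hγne) h2
  obtain ⟨n, hn0, hen, hfn⟩ := exists_orth e f
  have hwn : ⟪w, n⟫_ℝ = 0 := by
    have h := congrArg (fun y => ⟪y, n⟫_ℝ) hγf
    simp only [real_inner_smul_left, inner_add_left] at h
    rw [hfn, hen] at h
    linarith
  set r : ℝ := max 1 (m / 2) with hrdef
  have hr1 : 1 ≤ r := le_max_left _ _
  have hrm : m / 2 ≤ r := le_max_right _ _
  have hr0 : 0 < r := lt_of_lt_of_le one_pos hr1
  set t : ℝ := Real.sqrt (r ^ 2 - m ^ 2 / 4) with htdef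
  have ht0 : 0 ≤ t := Real.sqrt_nonneg _
  have ht2 : t ^ 2 = r ^ 2 - m ^ 2 / 4 := Real.sq_sqrt (by nlinarith [hrm, hm0])
  obtain ⟨u, hudef⟩ : ∃ u : E3, u = m⁻¹ • (β • f + γ • e) := ⟨_, rfl⟩
  have hmu : m • u = β • f + γ • e := by
    rw [hudef, smul_smul, mul_inv_cancel₀ hmne, one_smul]
  have hue : ⟪u, e⟫_ℝ = γ / m := by
    have h := congrArg (fun y => ⟪y, e⟫_ℝ) hmu
    simp only [real_inner_smul_left, inner_add_left] at h
    rw [hfe, hee] at h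
    rw [eq_div_iff hmne]
    linarith
  have heu : ⟪e, u⟫_ℝ = γ / m := by rw [real_inner_comm]; exact hue
  have huw : ⟪u, w⟫_ℝ = 0 := by
    have h := congrArg (fun y => ⟪y, w⟫_ℝ) hmu
    simp only [real_inner_smul_left, inner_add_left] at h
    rw [hfw, hew] at h
    have h2 : m * ⟪u, w⟫_ℝ = 0 := by linarith
    exact (mul_eq_zero.mp h2).resolve_left hmne
  have hwu : ⟪w, u⟫_ℝ = 0 := by rw [real_inner_comm]; exact huw
  have hun : ⟪u, n⟫_ℝ = 0 := by
    have h := congrArg (fun y => ⟪y, n⟫_ℝ) hmu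
    simp only [real_inner_smul_left, inner_add_left] at h
    rw [hfn, hen] at h
    have h2 : m * ⟪u, n⟫_ℝ = 0 := by linarith
    exact (mul_eq_zero.mp h2).resolve_left hmne
  have huu : ⟪u, u⟫_ℝ = 1 := by
    have h : ⟪m • u, m • u⟫_ℝ = ⟪β • f + γ • e, β • f + γ • e⟫_ℝ := by rw [hmu]
    simp only [inner_add_left, inner_add_right, real_inner_smul_left, real_inner_smul_right,
      hff, hfe, hef, hee] at h
    have h2 : m * m * ⟪u, u⟫_ℝ = m * m * 1 := by nlinarith [hγ2]
    exact mul_left_cancel₀ (mul_ne_zero hmne hmne) h2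
  have hu0 : u ≠ 0 := by
    intro h
    rw [h] at huu
    simp at huu
  obtain ⟨c, hcdef⟩ : ∃ c : E3, c = p + (1 / 2 : ℝ) • w - t • u := ⟨_, rfl⟩
  have hpc : p - c = (-(1 / 2 : ℝ)) • w + t • u := by rw [hcdef]; module
  have hq' : q = p + w := by rw [hwdef]; module
  have hqc : q - c = ((1 / 2 : ℝ)) • w + t • u := by
    rw [hcdef, hq']; module
  have expand : ∀ (α δ : ℝ), ⟪α • w + δ • u, α • w + δ • u⟫_ℝ = α ^ 2 * m ^ 2 + δ ^ 2 := by
    intro α δ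
    simp only [inner_add_left, inner_add_right, real_inner_smul_left, real_inner_smul_right,
      hww, hwu, huw, huu]
    ring
  have hpcn : ‖p - c‖ = r := by
    apply norm_eq_of_inner_self (le_of_lt hr0)
    rw [hpc, expand, ht2]; ring
  have hqcn : ‖q - c‖ = r := by
    apply norm_eq_of_inner_self (le_of_lt hr0)
    rw [hqc, expand, ht2]; ring
  have hpcn' : ⟪p - c, n⟫_ℝ = 0 := by
    rw [hpc]
    simp only [inner_add_left, real_inner_smul_left, hwn, hun]
    ring
  have hqcn' : ⟪q - c, n⟫_ℝ = 0 := by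
    rw [hqc]
    simp only [inner_add_left, real_inner_smul_left, hwn, hun]
    ring
  have hpcu : ⟪p - c, u⟫_ℝ = t := by
    rw [hpc]
    simp only [inner_add_left, real_inner_smul_left, hwu, huu]
    ring
  have hqcu : ⟪q - c, u⟫_ℝ = t := by
    rw [hqc]
    simp only [inner_add_left, real_inner_smul_left, hwu, huu]
    ring
  obtain ⟨x, hxdef⟩ : ∃ x : E3, x = c + r • e := ⟨_, rfl⟩
  have hxc : x - c = r • e := by rw [hxdef]; module
  have hxcn : ‖x - c‖ = r := by
    apply norm_eq_of_inner_self (le_of_lt hr0)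
    rw [hxc, real_inner_smul_left, real_inner_smul_right, hee]; ring
  have hxcn' : ⟪x - c, n⟫_ℝ = 0 := by
    rw [hxc, real_inner_smul_left, hen]; ring
  have hxcu : ⟪x - c, u⟫_ℝ = r * (γ / m) := by
    rw [hxc, real_inner_smul_left, heu]
  have hβr : 2 * r * β < m ^ 2 := by
    rw [hrdef, hβdef]; rw [hmdef]; exact hrc
  have harc : t ≤ r * (γ / m) :=
    arith1 hm0 hr0 hβ0 (le_of_lt hγpos) hγ2 ht0 ht2 hβr
  have hxS : x ∈ S :=
    hsc p hp q hq hpq c n u r hr1 hpcn hqcn hn0 hpcn' hqcn' hu0 hun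
      (by rw [hpcu, hqcu]) (by rw [hpcu]; exact ht0) x hxcn hxcn'
      (by rw [hpcu, hxcu]; exact harc)
  have hcontr := hsupp x hxS
  have hxp : x - p = (1 / 2 : ℝ) • w - t • u + r • e := by rw [hxdef, hcdef]; module
  have hval : ⟪x - p, e⟫_ℝ = -β / 2 - t * (γ / m) + r := by
    rw [hxp]
    simp only [inner_add_left, inner_sub_left, real_inner_smul_left, hwe, hue, hee]
    ring
  rw [hval] at hcontr
  have := arith2 hm0 hr0 hβ0 hβm hrm (le_of_lt hγpos) hγ2 ht0 ht2 hβr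
  linarith

/-- Separation by a unit sphere: a closed spindle-convex proper subset of ℝ³ can be
separated from any outside point by a closed unit ball containing it. -/
theorem spindleConvex_separation (S : Set E3) (hcl : IsClosed S) (hsc : SpindleConvex S)
    (hproper : S ≠ Set.univ) (z : E3) (hz : z ∉ S) :
    ∃ c : E3, S ⊆ Metric.closedBall c 1 ∧ z ∉ Metric.closedBall c 1 := by

  by_cases hS : S.Nonempty
  · obtain ⟨p, hpS, hdp⟩ := hcl.exists_infDist_eq_dist hS z
    have hd0 : 0 < infDist z S := (hcl.notMem_iff_infDist_pos hS).mp hz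
    have hdzp : ‖z - p‖ = infDist z S := by
      rw [← dist_eq_norm]; exact hdp.symm
    have hzp0 : ‖z - p‖ ≠ 0 := by rw [hdzp]; exact ne_of_gt hd0
    have hnear : ∀ x ∈ S, ‖p - z‖ ≤ ‖x - z‖ := by
      intro x hx
      have h1 : ‖p - z‖ = infDist z S := by
        rw [← dist_eq_norm, dist_comm]; exact hdp.symm
      have h2 : infDist z S ≤ dist z x := infDist_le_dist_of_mem hx
      rw [h1, ← dist_eq_norm, dist_comm]
      exact h2
    have hsupp0 : ∀ x ∈ S, ⟪x - p, z - p⟫_ℝ ≤ 0 := fun x hx =>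
      support_ineq S hcl hsc hpS hnear hx
    obtain ⟨e, hedef⟩ : ∃ e : E3, e = ‖z - p‖⁻¹ • (z - p) := ⟨_, rfl⟩
    have he : ‖e‖ = 1 := by
      rw [hedef, norm_smul, norm_inv, norm_norm, inv_mul_cancel₀ hzp0]
    have hsupp : ∀ x ∈ S, ⟪x - p, e⟫_ℝ ≤ 0 := by
      intro x hx
      rw [hedef, real_inner_smul_right]
      exact mul_nonpos_of_nonneg_of_nonpos (by positivity) (hsupp0 x hx)
    refine ⟨p - e, ?_, ?_⟩
    · intro q hqS
      rw [mem_closedBall, dist_eq_norm]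
      by_contra hq1
      push_neg at hq1
      have hqpe : q - (p - e) = (q - p) + e := by module
      rw [hqpe] at hq1
      have hsq : 1 < ‖q - p‖ ^ 2 + 2 * ⟪q - p, e⟫_ℝ + 1 := by
        have hn := norm_add_sq_real (q - p) e
        rw [he] at hn
        nlinarith [hq1, norm_nonneg (q - p + e)]
      have hε : 2 * (-⟪q - p, e⟫_ℝ) < ‖q - p‖ ^ 2 := by linarith
      have hβ0 : 0 ≤ -⟪q - p, e⟫_ℝ := by linarith [hsupp q hqS]
      have hm0 : 0 < ‖q - p‖ := by nlinarith [norm_nonneg (q - p)]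
      by_cases hcase : (⟪q - p, e⟫_ℝ) ^ 2 < ‖q - p‖ ^ 2
      · have hβm : -⟪q - p, e⟫_ℝ < ‖q - p‖ := by nlinarith
        have hrc : 2 * max 1 (‖q - p‖ / 2) * (-⟪q - p, e⟫_ℝ) < ‖q - p‖ ^ 2 := by
          rcases le_total (‖q - p‖ / 2) 1 with h | h
          · rw [max_eq_left h]; linarith
          · rw [max_eq_right h]; nlinarith
        exact (key S hsc hpS hqS he hsupp hcase hrc).elim
      · push_neg at hcase
        have hCS : (⟪q - p, e⟫_ℝ) ^ 2 ≤ ‖q - p‖ ^ 2 := by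
          have h := abs_real_inner_le_norm (q - p) e
          rw [he, mul_one] at h
          nlinarith [abs_nonneg (⟪q - p, e⟫_ℝ), sq_abs (⟪q - p, e⟫_ℝ)]
        have heq : (⟪q - p, e⟫_ℝ) ^ 2 = ‖q - p‖ ^ 2 := le_antisymm hCS hcase
        set m : ℝ := ‖q - p‖ with hmdef
        have hβem : -⟪q - p, e⟫_ℝ = m := by nlinarith
        have hm2 : 2 < m := by nlinarith
        have hwq : q - p = (-m) • e := by
          have hz2 : ‖(q - p) + m • e‖ ^ 2 = 0 := by
            rw [norm_add_sq_real, norm_smul, Real.norm_eq_abs,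
              abs_of_nonneg (by linarith : (0:ℝ) ≤ m), he, real_inner_smul_right]
            nlinarith [hβem]
          have hz3 : (q - p) + m • e = 0 := by
            have := norm_eq_zero.mp (by nlinarith [norm_nonneg ((q - p) + m • e), hz2] : ‖(q - p) + m • e‖ = 0)
            exact this
          have h4 : q - p = -(m • e) := eq_neg_of_add_eq_zero_left hz3
          rw [h4]; module
        have hq' : q = p + (-m) • e := by rw [← hwq]; module
        obtain ⟨f, hf1, hef0⟩ := exists_unit_orth e
        have hfe0 : ⟪f, e⟫_ℝ = 0 := by rw [real_inner_comm]; exact hef0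
        have hf0 : f ≠ 0 := by intro h; rw [h] at hf1; simp at hf1
        obtain ⟨n, hn0, hen, hfn⟩ := exists_orth e f
        have hee : ⟪e, e⟫_ℝ = 1 := by rw [real_inner_self_eq_norm_sq, he]; norm_num
        have hff : ⟪f, f⟫_ℝ = 1 := by rw [real_inner_self_eq_norm_sq, hf1]; norm_num
        obtain ⟨c₀, hc₀⟩ : ∃ c₀ : E3, c₀ = p - (m / 2) • e := ⟨_, rfl⟩
        obtain ⟨x, hxdef⟩ : ∃ x : E3, x = c₀ + (m / 2) • f := ⟨_, rfl⟩
        have hpc₀ : p - c₀ = (m / 2) • e := by rw [hc₀]; module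
        have hqc₀ : q - c₀ = (-(m / 2)) • e := by rw [hc₀, hq']; module
        have hxc₀ : x - c₀ = (m / 2) • f := by rw [hxdef]; module
        have hm20 : (0:ℝ) ≤ m / 2 := by linarith
        have hnsm : ∀ (y : E3) (α : ℝ), ‖y‖ = 1 → ‖α • y‖ = |α| := by
          intro y α hy; rw [norm_smul, Real.norm_eq_abs, hy, mul_one]
        have hpq : p ≠ q := by
          intro h
          rw [h] at hpc₀
          rw [hqc₀] at hpc₀
          have := congrArg (fun y => ⟪y, e⟫_ℝ) hpc₀
          simp only [real_inner_smul_left] at this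
          rw [hee] at this
          linarith
        have hxS : x ∈ S := by
          refine hsc p hpS q hqS hpq c₀ n f (m / 2) (by linarith) ?_ ?_ hn0 ?_ ?_ hf0 hfn ?_ ?_ x ?_ ?_ ?_
          · rw [hpc₀, hnsm e _ he, abs_of_nonneg hm20]
          · rw [hqc₀, hnsm e _ he, abs_of_nonpos (by linarith), neg_neg]
          · rw [hpc₀, real_inner_smul_left, hen, mul_zero]
          · rw [hqc₀, real_inner_smul_left, hen, mul_zero]
          · rw [hpc₀, hqc₀, real_inner_smul_left, real_inner_smul_left, hef0]; ring
          · rw [hpc₀, real_inner_smul_left, hef0]; positivity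
          · rw [hxc₀, hnsm f _ hf1, abs_of_nonneg hm20]
          · rw [hxc₀, real_inner_smul_left, hfn, mul_zero]
          · rw [hpc₀, hxc₀, real_inner_smul_left, real_inner_smul_left, hef0, hff]
            nlinarith
        have hxp : x - p = (m / 2) • f - (m / 2) • e := by rw [hxdef, hc₀]; module
        have hxpe : ⟪x - p, e⟫_ℝ = -(m / 2) := by
          rw [hxp, inner_sub_left, real_inner_smul_left, real_inner_smul_left, hfe0, hee]
          ring
        have hxpn : ‖x - p‖ ^ 2 = m ^ 2 / 2 := by
          rw [← real_inner_self_eq_norm_sq, hxp]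
          simp only [inner_sub_left, inner_sub_right, real_inner_smul_left,
            real_inner_smul_right, hfe0, hef0, hee, hff]
          ring
        have hγx : (⟪x - p, e⟫_ℝ) ^ 2 < ‖x - p‖ ^ 2 := by
          rw [hxpe, hxpn]; nlinarith
        have hxpm : ‖x - p‖ < m := by
          nlinarith [norm_nonneg (x - p), hxpn]
        have hrcx : 2 * max 1 (‖x - p‖ / 2) * (-⟪x - p, e⟫_ℝ) < ‖x - p‖ ^ 2 := by
          rw [hxpe, hxpn, neg_neg]
          have hmax : max 1 (‖x - p‖ / 2) < m / 2 := by
            apply max_lt (by linarith) (by linarith)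
          nlinarith
        exact (key S hsc hpS hxS he hsupp hγx hrcx).elim
    · rw [mem_closedBall, dist_eq_norm]
      have hzc : z - (p - e) = (1 + ‖z - p‖⁻¹) • (z - p) := by
        rw [hedef]; module
      rw [hzc, norm_smul, Real.norm_eq_abs,
        abs_of_nonneg (by positivity : (0:ℝ) ≤ 1 + ‖z - p‖⁻¹)]
      have h1 : (1 + ‖z - p‖⁻¹) * ‖z - p‖ = ‖z - p‖ + 1 := by
        field_simp
      rw [h1]
      push_neg
      rw [hdzp]
      linarith
  · refine ⟨z + (2:ℝ) • EuclideanSpace.single (0 : Fin 3) (1:ℝ), ?_, ?_⟩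
    · intro x hx
      exact absurd ⟨x, hx⟩ hS
    · rw [mem_closedBall, dist_eq_norm]
      have : z - (z + (2:ℝ) • EuclideanSpace.single (0 : Fin 3) (1:ℝ)) =
          (-2 : ℝ) • EuclideanSpace.single (0 : Fin 3) (1:ℝ) := by module
      rw [this, norm_smul]
      simp [EuclideanSpace.norm_single]
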